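/- Let x₁,…,xₙ ∈ [-1,1] \ {0} with |x₁| < |x₂| < ⋯ < |xₙ|, and f(x) = ∏_{i=1}^n (x - x_i). Then for every s with 0 ≤ s < n there is a point x̄_s ∈ [-1,1] with |x̄_s| ≤ |x_s| (for s ≥ 1; |x̄_0| = 0) such that |f^{(s)}(x̄_s)| ≥ (1/2^s) ∏_{i=s+1}^n |x_i| > 0. -/

import Mathlib

open Set Finset

/-- Rolle step on a finite set of roots. -/
private lemma rolle_finset (g : ℝ → ℝ) (hg : Differentiable ℝ g) (a b : ℝ) :
    ∀ (k : ℕ) (S : Finset ℝ), S.card = k + 1 →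
      (∀ y ∈ S, y ∈ Set.Icc a b ∧ g y = 0) →
      ∃ T : Finset ℝ, T.card = k ∧
        ∀ y ∈ T, y ∈ Set.Icc a b ∧ (∃ z ∈ S, y < z) ∧ deriv g y = 0 := by
  intro k
  induction k with
  | zero => intro S _ _; exact ⟨∅, by simp⟩
  | succ k ih =>
    intro S hcard hroots
    have hne : S.Nonempty := Finset.card_pos.mp (by omega)
    set M := S.max' hne with hM
    have hMS : M ∈ S := S.max'_mem hne
    set S' := S.erase M with hS'
    have hcard' : S'.card = k + 1 := by
      rw [hS', Finset.card_erase_of_mem hMS, hcard]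
      omega

    have hne' : S'.Nonempty := Finset.card_pos.mp (by omega)
    set M' := S'.max' hne' with hM'
    have hM'S' : M' ∈ S' := S'.max'_mem hne'
    have hM'S : M' ∈ S := Finset.mem_of_mem_erase hM'S'
    have hM'lt : M' < M := by
      have hle : M' ≤ M := S.le_max' _ hM'S
      have hne2 : M' ≠ M := Finset.ne_of_mem_erase hM'S'
      exact lt_of_le_of_ne hle hne2
    obtain ⟨T', hT'card, hT'⟩ := ih S' hcard' (fun y hy => hroots y (Finset.mem_of_mem_erase hy))
    -- Rolle between M' and M
    have hgM' : g M' = 0 := (hroots M' hM'S).2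
    have hgM : g M = 0 := (hroots M hMS).2
    obtain ⟨c, hc, hc0⟩ := exists_deriv_eq_zero hM'lt (hg.continuous.continuousOn)
      (by rw [hgM', hgM])
    have hcT' : c ∉ T' := by
      intro hcmem
      obtain ⟨z, hz, hlt⟩ := (hT' c hcmem).2.1
      have : z ≤ M' := S'.le_max' _ hz
      linarith [hc.1]
    refine ⟨insert c T', ?_, ?_⟩
    · rw [Finset.card_insert_of_notMem hcT', hT'card]
    · intro y hy
      rcases Finset.mem_insert.mp hy with rfl | hy'
      · refine ⟨⟨?_, ?_⟩, ⟨M, hMS, hc.2⟩, hc0⟩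
        · exact le_trans (hroots M' hM'S).1.1 hc.1.le
        · exact le_trans hc.2.le (hroots M hMS).1.2
      · obtain ⟨hIcc, ⟨z, hz, hlt⟩, hd⟩ := hT' y hy'
        exact ⟨hIcc, ⟨z, Finset.mem_of_mem_erase hz, hlt⟩, hd⟩

/-- Iterated Rolle: k+1 roots in an interval give a root of the k-th derivative. -/
private lemma iterated_rolle (a b : ℝ) :
    ∀ (k : ℕ) (g : ℝ → ℝ), ContDiff ℝ (⊤ : ℕ∞) g →
      ∀ S : Finset ℝ, S.card = k + 1 → (∀ y ∈ S, y ∈ Set.Icc a b ∧ g y = 0) →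
      ∃ y ∈ Set.Icc a b, iteratedDeriv k g y = 0 := by
  intro k
  induction k with
  | zero =>
    intro g _ S hcard hroots
    have hne : S.Nonempty := Finset.card_pos.mp (by omega)
    obtain ⟨y, hy⟩ := hne
    exact ⟨y, (hroots y hy).1, by simpa [iteratedDeriv_zero] using (hroots y hy).2⟩
  | succ k ih =>
    intro g hg S hcard hroots
    obtain ⟨T, hTcard, hT⟩ := rolle_finset g (hg.differentiable (by simp)) a b (k + 1) S hcard hroots
    have hg' : ContDiff ℝ (⊤ : ℕ∞) (deriv g) := (contDiff_infty_iff_deriv.mp hg).2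
    obtain ⟨y, hy, hd⟩ := ih (deriv g) hg' T hTcard
      (fun y hy => ⟨(hT y hy).1, (hT y hy).2.2⟩)
    exact ⟨y, hy, by rwa [iteratedDeriv_succ']⟩

theorem stmt2 (n : ℕ) (x : Fin n → ℝ)
    (hx0 : ∀ i, x i ≠ 0) (hx1 : ∀ i, |x i| ≤ 1)
    (hmono : ∀ i j : Fin n, i < j → |x i| < |x j|)
    (f : ℝ → ℝ) (hf : f = fun t => ∏ i, (t - x i))
    (s : ℕ) (hs : s < n) :
    ∃ xb : ℝ, |xb| ≤ 1 ∧ (s = 0 → xb = 0) ∧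
      (∀ _ : 0 < s, |xb| ≤ |x ⟨s - 1, by omega⟩|) ∧
      0 < (1 / 2 ^ s : ℝ) *
          ∏ i ∈ Finset.univ.filter (fun i : Fin n => s ≤ (i : ℕ)), |x i| ∧
      (1 / 2 ^ s : ℝ) *
          ∏ i ∈ Finset.univ.filter (fun i : Fin n => s ≤ (i : ℕ)), |x i| ≤
        |iteratedDeriv s f xb| := by
  have hfC : ContDiff ℝ (⊤ : ℕ∞) f := by
    rw [hf]
    exact contDiff_prod (fun i _ => contDiff_id.sub contDiff_const)
  set c : ℕ → ℝ := fun s =>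
    (1 / 2 ^ s : ℝ) * ∏ i ∈ Finset.univ.filter (fun i : Fin n => s ≤ (i : ℕ)), |x i| with hc
  have hcpos : ∀ s, 0 < c s := by
    intro s
    apply mul_pos (by positivity)
    exact Finset.prod_pos fun i _ => abs_pos.mpr (hx0 i)
  -- key recursion on the product
  have hprod : ∀ s : ℕ, (hs : s < n) →
      (∏ i ∈ Finset.univ.filter (fun i : Fin n => s ≤ (i : ℕ)), |x i|)
        = |x ⟨s, hs⟩| * ∏ i ∈ Finset.univ.filter (fun i : Fin n => s + 1 ≤ (i : ℕ)), |x i| := by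
    intro s hsn
    have hset : Finset.univ.filter (fun i : Fin n => s ≤ (i : ℕ))
        = insert ⟨s, hsn⟩ (Finset.univ.filter (fun i : Fin n => s + 1 ≤ (i : ℕ))) := by
      ext i
      simp only [Finset.mem_filter, Finset.mem_univ, true_and, Finset.mem_insert, Fin.ext_iff]
      omega
    rw [hset, Finset.prod_insert (by simp)]
  have hcrec : ∀ s : ℕ, (hs : s < n) → c (s + 1) = c s / (2 * |x ⟨s, hs⟩|) := by
    intro s hsn
    have hxa : |x ⟨s, hsn⟩| ≠ 0 := abs_ne_zero.mpr (hx0 _)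
    rw [hc]
    simp only []
    rw [hprod s hsn]
    field_simp
    ring
  -- injectivity of x
  have hxinj : Function.Injective x := by
    intro i j hij
    by_contra hne
    rcases lt_or_gt_of_ne hne with h | h
    · exact absurd (congrArg abs hij) (ne_of_lt (hmono i j h))
    · exact absurd (congrArg abs hij) (ne_of_gt (hmono j i h))
  -- monotonicity of |x| up to index s
  have habs_le : ∀ (s : ℕ) (hsn : s < n) (i : Fin n), (i : ℕ) ≤ s → |x i| ≤ |x ⟨s, hsn⟩| := by
    intro s hsn i hi
    rcases eq_or_lt_of_le hi with h | h
    · exact le_of_eq (congrArg (fun j => |x j|) (Fin.ext h))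
    · exact (hmono i ⟨s, hsn⟩ h).le
  -- main induction
  have main : ∀ s : ℕ, (hsn : s < n) → ∃ xb : ℝ,
      (s = 0 → xb = 0) ∧ (0 < s → |xb| ≤ |x ⟨s - 1, by omega⟩|) ∧
      c s ≤ |iteratedDeriv s f xb| := by
    intro s
    induction s with
    | zero =>
      intro _
      refine ⟨0, fun _ => rfl, by omega, ?_⟩
      have : f 0 = ∏ i, (-x i) := by rw [hf]; simp
      rw [iteratedDeriv_zero, this, hc]
      simp only [pow_zero, one_div, inv_one, one_mul]
      rw [Finset.abs_prod]
      apply le_of_eq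
      refine Finset.prod_congr ?_ (fun i _ => by rw [abs_neg])
      ext i; simp
    | succ s ih =>
      intro hsn
      have hsn' : s < n := by omega
      obtain ⟨xb, hxb0, hxble, hxbder⟩ := ih hsn'
      -- |xb| ≤ |x ⟨s⟩|
      have hxble' : |xb| ≤ |x ⟨s, hsn'⟩| := by
        rcases Nat.eq_zero_or_pos s with rfl | hpos
        · rw [hxb0 rfl]; simpa using abs_nonneg (x ⟨0, hsn'⟩)
        · refine le_trans (hxble hpos) ?_
          exact (hmono ⟨s - 1, by omega⟩ ⟨s, hsn'⟩ (by simp [Fin.lt_def]; omega)).le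
      set A := |x ⟨s, hsn'⟩| with hA
      have hApos : 0 < A := abs_pos.mpr (hx0 _)
      -- find a root y of iteratedDeriv s f with |y| ≤ A
      have hroot : ∃ y ∈ Set.Icc (-A) A, iteratedDeriv s f y = 0 := by
        apply iterated_rolle (-A) A s f hfC
          ((Finset.univ.filter (fun i : Fin n => (i : ℕ) ≤ s)).image x)
        · rw [Finset.card_image_of_injective _ hxinj]
          rw [Finset.filter_congr (fun i _ => by
            rw [show ((i : ℕ) ≤ s) = (i ≤ ⟨s, hsn'⟩) from propext (by simp [Fin.le_def])])]
          rw [show (Finset.univ.filter (fun i : Fin n => i ≤ (⟨s, hsn'⟩ : Fin n))) = Finset.Iic ⟨s, hsn'⟩ by ext i; simp]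
          simp [Fin.card_Iic]
        · intro y hy
          obtain ⟨i, hi, rfl⟩ := Finset.mem_image.mp hy
          have hile : (i : ℕ) ≤ s := (Finset.mem_filter.mp hi).2
          have : |x i| ≤ A := habs_le s hsn' i hile
          refine ⟨abs_le.mp this, ?_⟩
          rw [hf]
          exact Finset.prod_eq_zero (Finset.mem_univ i) (sub_self _)
      obtain ⟨y, hyIcc, hy0⟩ := hroot
      have hyabs : |y| ≤ A := abs_le.mpr hyIcc
      -- xb ≠ y
      have hne : xb ≠ y := by
        intro h
        rw [h, hy0, abs_zero] at hxbder
        exact absurd hxbder (not_le.mpr (hcpos s))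
      set g := iteratedDeriv s f with hg
      have hgC : ContDiff ℝ (⊤ : ℕ∞) g := by
        rw [hg, iteratedDeriv_eq_iterate]; exact hfC.iterate_deriv s
      -- MVT between min and max of xb, y
      set a' := min xb y
      set b' := max xb y
      have hab : a' < b' := min_lt_max.mpr hne
      obtain ⟨ξ, hξmem, hξ⟩ := exists_deriv_eq_slope g hab hgC.continuous.continuousOn
        ((hgC.differentiable (by simp)).differentiableOn)
      have hξabs : |ξ| ≤ A := by
        rw [abs_le]
        constructor
        · have : -A ≤ a' := le_min (neg_le_of_abs_le hxble') (neg_le_of_abs_le hyabs)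
          linarith [hξmem.1]
        · have : b' ≤ A := max_le (le_of_abs_le hxble') (le_of_abs_le hyabs)
          linarith [hξmem.2]
      have hdiff : |g b' - g a'| = |g xb| := by
        rcases le_total xb y with h | h
        · have ha : a' = xb := min_eq_left h
          have hb : b' = y := max_eq_right h
          rw [ha, hb, hy0, zero_sub, abs_neg]
        · have ha : a' = y := min_eq_right h
          have hb : b' = xb := max_eq_left h
          rw [ha, hb, hy0, sub_zero]
      have hgap : b' - a' ≤ 2 * A := by
        have h1 : b' ≤ A := max_le (le_of_abs_le hxble') (le_of_abs_le hyabs)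
        have h2 : -A ≤ a' := le_min (neg_le_of_abs_le hxble') (neg_le_of_abs_le hyabs)
        linarith
      have hbound : c (s + 1) ≤ |deriv g ξ| := by
        rw [hξ, abs_div, hdiff, abs_of_pos (by linarith : (0:ℝ) < b' - a')]
        rw [hcrec s hsn']
        apply div_le_div₀ (abs_nonneg _) hxbder (by linarith) hgap
      refine ⟨ξ, by omega, fun _ => ?_, ?_⟩
      · simpa using hξabs
      · rwa [iteratedDeriv_succ]
  obtain ⟨xb, h0, hle, hd⟩ := main s hs
  refine ⟨xb, ?_, h0, fun hpos => hle hpos, hcpos s, hd⟩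
  rcases Nat.eq_zero_or_pos s with rfl | hpos
  · rw [h0 rfl]; simp
  · exact le_trans (hle hpos) (hx1 _)
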